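/- Let j ∈ ℕ, n ∈ ℕ and x ∈ [0,1). Then w_n(2^{−j} x) = w_{⌊n/2^j⌋}(x). -/

import Mathlib

open MeasureTheory

/-- `natDigit n i` is the `i`-th binary digit `n^(i)` (for `i ≥ 1`) of `n ∈ ℕ`,
so that `n = Σ_{i ≥ 1} n^(i) 2^(i-1)`. -/
def natDigit (n i : ℕ) : ℕ := (n / 2 ^ (i - 1)) % 2

/-- `dyadicDigit x i` is the `i`-th dyadic digit `x^(i) = ⌊2^i x⌋ − 2⌊2^(i−1) x⌋`
(for `i ≥ 1`) of `x ∈ [0,1)`. -/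
noncomputable def dyadicDigit (x : ℝ) (i : ℕ) : ℤ :=
  ⌊(2 : ℝ) ^ i * x⌋ - 2 * ⌊(2 : ℝ) ^ (i - 1) * x⌋

/-- The sequency-ordered Walsh function
`w_n(x) = (−1)^{Σ_{i≥1} (n^(i) + n^(i+1)) x^(i)}`; the sum is finite since
`n^(i) = 0` for `i > n`, so it may be truncated at `i = n + 1`. -/
noncomputable def walsh (n : ℕ) (x : ℝ) : ℝ :=
  (-1 : ℝ) ^ ∑ i ∈ Finset.Icc 1 (n + 1),
    (natDigit n i + natDigit n (i + 1)) * (dyadicDigit x i).toNat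

/-- The dyadic XOR `x ⊕ y := Σ_{i≥1} |x^(i) − y^(i)| 2^{−i}` of `x, y ∈ [0,1)`. -/
noncomputable def dyadicXor (x y : ℝ) : ℝ :=
  ∑' i : ℕ, |(dyadicDigit x (i + 1) : ℝ) - (dyadicDigit y (i + 1) : ℝ)| / 2 ^ (i + 1)

lemma natDigit_div_pow (n j k : ℕ) (hk : 1 ≤ k) :
    natDigit (n / 2 ^ j) k = natDigit n (k + j) := by
  unfold natDigit
  rw [Nat.div_div_eq_div_mul, ← pow_add, show j + (k - 1) = k + j - 1 by omega]

lemma natDigit_eq_zero (n k : ℕ) (h : n < 2 ^ (k - 1)) : natDigit n k = 0 := by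
  unfold natDigit
  rw [Nat.div_eq_of_lt h]

lemma natDigit_eq_zero' (n k : ℕ) (h : n + 2 ≤ k) : natDigit n k = 0 := by
  apply natDigit_eq_zero
  calc n < 2 ^ n := Nat.lt_two_pow_self
    _ ≤ 2 ^ (k - 1) := Nat.pow_le_pow_right (by norm_num) (by omega)

lemma floor_aux (x : ℝ) (hx : 0 ≤ x) (hx1 : x < 1) (l j : ℕ) (h : l ≤ j) :
    ⌊(2 : ℝ) ^ l * (x / 2 ^ j)⌋ = 0 := by
  rw [Int.floor_eq_zero_iff]
  constructor
  · positivity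
  · calc (2 : ℝ) ^ l * (x / 2 ^ j) = x * ((2:ℝ) ^ l / 2 ^ j) := by ring
      _ ≤ x * 1 := by
          apply mul_le_mul_of_nonneg_left _ hx
          rw [div_le_one (by positivity)]
          exact pow_le_pow_right₀ (by norm_num) h
      _ < 1 := by linarith

lemma dyadicDigit_div_zero (x : ℝ) (hx : 0 ≤ x) (hx1 : x < 1) (j i : ℕ) (hij : i ≤ j) :
    dyadicDigit (x / 2 ^ j) i = 0 := by
  unfold dyadicDigit
  rw [floor_aux x hx hx1 i j hij, floor_aux x hx hx1 (i-1) j (by omega)]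
  ring

lemma dyadicDigit_div_pow (x : ℝ) (j k : ℕ) (hk : 1 ≤ k) :
    dyadicDigit (x / 2 ^ j) (k + j) = dyadicDigit x k := by
  unfold dyadicDigit
  have h1 : (2 : ℝ) ^ (k + j) * (x / 2 ^ j) = 2 ^ k * x := by
    rw [pow_add]; field_simp
  have h2 : (2 : ℝ) ^ (k + j - 1) * (x / 2 ^ j) = 2 ^ (k - 1) * x := by
    rw [show k + j - 1 = (k - 1) + j by omega, pow_add]; field_simp
  rw [h1, h2]


/-- For `j, n ∈ ℕ` and `x ∈ [0,1)`, `w_n(2^{−j} x) = w_{⌊n/2^j⌋}(x)`. -/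
theorem walsh_scale (j n : ℕ) (x : ℝ) (hx : x ∈ Set.Ico (0 : ℝ) 1) :
    walsh n (x / 2 ^ j) = walsh (n / 2 ^ j) x := by
  obtain ⟨hx0, hx1⟩ := hx
  unfold walsh
  congr 1
  set m := n / 2 ^ j with hm
  have hmn : m ≤ n := Nat.div_le_self _ _
  have h1 : ∑ i ∈ Finset.Icc 1 (n+1),
        (natDigit n i + natDigit n (i+1)) * (dyadicDigit (x / 2^j) i).toNat
      = ∑ i ∈ Finset.Icc (j+1) (n+1),
        (natDigit n i + natDigit n (i+1)) * (dyadicDigit (x / 2^j) i).toNat := by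
    symm
    apply Finset.sum_subset
    · intro i hi
      simp only [Finset.mem_Icc] at hi ⊢
      omega
    · intro i hi hni
      simp only [Finset.mem_Icc] at hi hni
      rw [dyadicDigit_div_zero x hx0 hx1 j i (by omega)]
      simp
  have h2 : ∑ i ∈ Finset.Icc (j+1) (n+1),
        (natDigit n i + natDigit n (i+1)) * (dyadicDigit (x / 2^j) i).toNat
      = ∑ k ∈ Finset.Icc 1 (n+1-j),
        (natDigit m k + natDigit m (k+1)) * (dyadicDigit x k).toNat := by
    symm
    apply Finset.sum_bij' (fun k _ => k + j) (fun i _ => i - j)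
    · intro k hk
      simp only [Finset.mem_Icc] at hk ⊢
      omega
    · intro i hi
      simp only [Finset.mem_Icc] at hi ⊢
      omega
    · intro k hk; omega
    · intro i hi
      simp only [Finset.mem_Icc] at hi
      omega
    · intro k hk
      simp only [Finset.mem_Icc] at hk
      rw [natDigit_div_pow n j k hk.1, natDigit_div_pow n j (k+1) (by omega),
        dyadicDigit_div_pow x j k hk.1, show k + 1 + j = k + j + 1 by omega]
  have h3 : ∑ k ∈ Finset.Icc 1 (n+1-j),
        (natDigit m k + natDigit m (k+1)) * (dyadicDigit x k).toNat
      = ∑ k ∈ Finset.Icc 1 (n+1),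
        (natDigit m k + natDigit m (k+1)) * (dyadicDigit x k).toNat := by
    apply Finset.sum_subset
    · intro k hk
      simp only [Finset.mem_Icc] at hk ⊢
      omega
    · intro k hk hnk
      simp only [Finset.mem_Icc] at hk hnk
      rw [natDigit_div_pow n j k (by omega), natDigit_div_pow n j (k+1) (by omega),
        natDigit_eq_zero' n (k+j) (by omega), natDigit_eq_zero' n (k+1+j) (by omega)]
      simp
  have h4 : ∑ k ∈ Finset.Icc 1 (m+1),
        (natDigit m k + natDigit m (k+1)) * (dyadicDigit x k).toNat
      = ∑ k ∈ Finset.Icc 1 (n+1),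
        (natDigit m k + natDigit m (k+1)) * (dyadicDigit x k).toNat := by
    apply Finset.sum_subset
    · intro k hk
      simp only [Finset.mem_Icc] at hk ⊢
      omega
    · intro k hk hnk
      simp only [Finset.mem_Icc] at hk hnk
      rw [natDigit_eq_zero' m k (by omega), natDigit_eq_zero' m (k+1) (by omega)]
      simp
  rw [h1, h2, h3, h4]
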